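/- Let h : 2^N → ℝ≥0 be monotone submodular with multilinear extension H, and let OPT = h(W) for some fixed W ⊆ N. Then for any x ∈ [0,1]^N, OPT ≤ H(x) + Σ_{e ∈ W} (H(x ∨ 1_e) − H(x)), where (x ∨ 1_e) sets coordinate e to 1 and leaves others unchanged. -/

import Mathlib

open Finset

/-- The multilinear extension of a set function `h` on a finite ground set. -/
noncomputable def mlExt {N : Type*} [Fintype N] [DecidableEq N]
    (h : Finset N → ℝ) (x : N → ℝ) : ℝ :=
  ∑ U ∈ (Finset.univ : Finset N).powerset,
    (∏ e ∈ U, x e) * (∏ e ∈ Finset.univ \ U, (1 - x e)) * h U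

section aux
variable {N : Type*} [Fintype N] [DecidableEq N]

lemma mlExt_key (h : Finset N → ℝ)
    (hmono : ∀ U V : Finset N, U ⊆ V → h U ≤ h V)
    (hsub : ∀ U V : Finset N, h U + h V ≥ h (U ∪ V) + h (U ∩ V))
    (U W : Finset N) :
    h W ≤ h U + ∑ e ∈ W, (h (U ∪ {e}) - h U) := by
  have main : ∀ W : Finset N, h (U ∪ W) ≤ h U + ∑ e ∈ W, (h (U ∪ {e}) - h U) := by
    intro W
    induction W using Finset.induction with
    | empty => simp
    | @insert a s ha ih =>
      have h1 := hsub (U ∪ {a}) (U ∪ s)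
      have e1 : (U ∪ {a}) ∪ (U ∪ s) = U ∪ insert a s := by
        ext y; simp [or_comm, or_left_comm, or_assoc]
      have e2 : U ⊆ (U ∪ {a}) ∩ (U ∪ s) := by
        intro y hy; simp [hy]
      have h2 : h U ≤ h ((U ∪ {a}) ∩ (U ∪ s)) := hmono _ _ e2
      rw [e1] at h1
      rw [Finset.sum_insert ha]
      linarith
  calc h W ≤ h (U ∪ W) := hmono _ _ Finset.subset_union_right
    _ ≤ _ := main W

lemma mlExt_marginal (h : Finset N → ℝ) (x : N → ℝ) (e : N) :
    mlExt h (fun e' => if e' = e then 1 else x e')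
      = ∑ U ∈ (Finset.univ : Finset N).powerset,
          (∏ a ∈ U, x a) * (∏ a ∈ Finset.univ \ U, (1 - x a)) * h (U ∪ {e}) := by
  classical
  set y : N → ℝ := fun e' => if e' = e then 1 else x e' with hy
  set s : Finset N := Finset.univ.erase e with hs
  have hes : e ∉ s := Finset.notMem_erase e _
  have huniv : (Finset.univ : Finset N) = insert e s := by
    rw [hs, Finset.insert_erase (Finset.mem_univ e)]
  have hsum := fun (f : Finset N → ℝ) =>
    Finset.sum_powerset_insert (s := s) (a := e) hes f
  rw [mlExt]
  conv_lhs => rw [huniv]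
  rw [hsum]
  conv_rhs => rw [huniv, hsum]
  rw [← huniv]
  have zero1 : ∀ t ∈ s.powerset,
      (∏ a ∈ t, y a) * (∏ a ∈ Finset.univ \ t, (1 - y a)) * h t = 0 := by
    intro t ht
    have het : e ∉ t := fun hc => hes (Finset.mem_powerset.mp ht hc)
    have : e ∈ Finset.univ \ t := by simp [het]
    have : (∏ a ∈ Finset.univ \ t, (1 - y a)) = 0 := by
      apply Finset.prod_eq_zero this
      simp [hy]
    rw [this]; ring
  rw [Finset.sum_congr rfl zero1]
  simp only [Finset.sum_const_zero, zero_add]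
  rw [← Finset.sum_add_distrib]
  refine Finset.sum_congr rfl fun t ht => ?_
  have het : e ∉ t := fun hc => hes (Finset.mem_powerset.mp ht hc)
  have hins : insert e t ∪ {e} = insert e t := by
    ext a; simp [or_comm]
  have htun : t ∪ {e} = insert e t := by
    ext a; simp [or_comm]
  have hcompl : Finset.univ \ t = insert e (Finset.univ \ insert e t) := by
    ext a
    by_cases hae : a = e <;> simp [hae, het]
  have henc : e ∉ Finset.univ \ insert e t := by simp
  -- expand both sides
  rw [hins, htun]
  rw [Finset.prod_insert het, Finset.prod_insert het, hcompl,
      Finset.prod_insert henc]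
  have hye : y e = 1 := by simp [hy]
  have hyt : ∀ a ∈ t, y a = x a := by
    intro a hat
    have hne : a ≠ e := fun hc => het (hc ▸ hat)
    simp [hy, hne]
  have hyc : ∀ a ∈ Finset.univ \ insert e t, (1 - y a) = (1 - x a) := by
    intro a hac
    have : a ≠ e := by intro hc; rw [hc] at hac; exact henc hac
    simp [hy, this]
  rw [hye, Finset.prod_congr rfl hyt, Finset.prod_congr rfl hyc]
  ring

end aux

theorem stmt5 {N : Type*} [Fintype N] [DecidableEq N] (h : Finset N → ℝ)
    (hnonneg : ∀ U, 0 ≤ h U)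
    (hmono : ∀ U V : Finset N, U ⊆ V → h U ≤ h V)
    (hsub : ∀ U V : Finset N, h U + h V ≥ h (U ∪ V) + h (U ∩ V))
    (W : Finset N) (OPT : ℝ) (hOPT : OPT = h W)
    (x : N → ℝ) (hx : ∀ e, 0 ≤ x e ∧ x e ≤ 1) :
    OPT ≤ mlExt h x +
      ∑ e ∈ W, (mlExt h (fun e' => if e' = e then 1 else x e') - mlExt h x) := by
  classical
  set w : Finset N → ℝ := fun U =>
    (∏ a ∈ U, x a) * (∏ a ∈ Finset.univ \ U, (1 - x a)) with hw
  have wnonneg : ∀ U, 0 ≤ w U := by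
    intro U
    apply mul_nonneg <;> apply Finset.prod_nonneg <;> intro a _
    · exact (hx a).1
    · linarith [(hx a).2]
  have wsum : ∑ U ∈ (Finset.univ : Finset N).powerset, w U = 1 := by
    have := Finset.prod_add (x) (fun a => 1 - x a) (Finset.univ : Finset N)
    simp only [add_sub_cancel, Finset.prod_const_one] at this
    rw [hw]; simp only [← this]
  have hml : mlExt h x = ∑ U ∈ (Finset.univ : Finset N).powerset, w U * h U := by
    rw [mlExt]
  have step1 : OPT ≤ ∑ U ∈ (Finset.univ : Finset N).powerset,
      w U * (h U + ∑ e ∈ W, (h (U ∪ {e}) - h U)) := by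
    rw [hOPT]
    calc h W = (∑ U ∈ (Finset.univ : Finset N).powerset, w U) * h W := by
              rw [wsum, one_mul]
      _ = ∑ U ∈ (Finset.univ : Finset N).powerset, w U * h W := by
              rw [Finset.sum_mul]
      _ ≤ _ := by
          apply Finset.sum_le_sum
          intro U _
          exact mul_le_mul_of_nonneg_left (mlExt_key h hmono hsub U W) (wnonneg U)
  refine step1.trans (le_of_eq ?_)
  have : ∀ U, w U * (h U + ∑ e ∈ W, (h (U ∪ {e}) - h U))
      = w U * h U + ∑ e ∈ W, (w U * h (U ∪ {e}) - w U * h U) := by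
    intro U
    rw [mul_add, Finset.mul_sum]
    simp only [mul_sub]
  rw [Finset.sum_congr rfl (fun U _ => this U), Finset.sum_add_distrib,
      Finset.sum_comm, hml]
  congr 1
  refine Finset.sum_congr rfl fun e _ => ?_
  rw [Finset.sum_sub_distrib, mlExt_marginal h x e]
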